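/- Let C ≥ 0, let P_1, …, P_n and S_1, …, S_m be finite nonempty subsets of ℝ^n, and define J(x_1, …, x_n, ω, b) = (1/2)‖ω‖² + C · Σ_{i=1}^n max(−1, −⟨ω, x_i⟩ − b) + C · Σ_{j=1}^m max(−1, max_{y ∈ S_j} (⟨ω, y⟩ + b)) for x_i ∈ P_i. Suppose sequences (x^{(k)})_{k≥1} with x_i^{(k)} ∈ P_i and (ω_k, b_k)_{k≥1} satisfy, for each k > 1: (i) ⟨ω_{k−1}, x_i^{(k)}⟩ + b_{k−1} = max_{x ∈ P_i} (⟨ω_{k−1}, x⟩ + b_{k−1}) for every i, and (ii) J(x^{(k)}, ω_k, b_k) ≤ J(x^{(k)}, ω, b) for all (ω, b) ∈ ℝ^n × ℝ. Then the sequence of objective values obj(k) = J(x^{(k)}, ω_k, b_k) is non-increasing in k, is bounded below by −C(n + m), and hence converges. (The convergence claim of Theorem 1 of the paper.) -/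
import Mathlib


open scoped RealInnerProductSpace

/-- Theorem 1: along the iterates of the Cutting Plane Algorithm, the objective values
`obj(k) = J(x^{(k)}, ω_k, b_k)` are non-increasing, bounded below by `−C(n+m)`, and
hence converge. -/
theorem cutting_plane_objective_converges
    (n m : ℕ) (C : ℝ) (hC : 0 ≤ C)
    (P : Fin n → Finset (EuclideanSpace ℝ (Fin n))) (hP : ∀ i, (P i).Nonempty)
    (S : Fin m → Finset (EuclideanSpace ℝ (Fin n))) (hS : ∀ j, (S j).Nonempty)
    (J : (Fin n → EuclideanSpace ℝ (Fin n)) → EuclideanSpace ℝ (Fin n) → ℝ → ℝ)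
    (hJ : ∀ xs w c, J xs w c =
      (1 / 2) * ‖w‖ ^ 2 +
        C * ∑ i : Fin n, max (-1 : ℝ) (-⟪w, xs i⟫ - c) +
        C * ∑ j : Fin m, max (-1 : ℝ) ((S j).sup' (hS j) fun y => ⟪w, y⟫ + c))
    (x : ℕ → Fin n → EuclideanSpace ℝ (Fin n))
    (hxmem : ∀ k i, x k i ∈ P i)
    (ω : ℕ → EuclideanSpace ℝ (Fin n)) (b : ℕ → ℝ)
    (hselect : ∀ k, 1 < k → ∀ i,
      ⟪ω (k - 1), x k i⟫ + b (k - 1) =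
        (P i).sup' (hP i) fun z => ⟪ω (k - 1), z⟫ + b (k - 1))
    (hminimize : ∀ k, 1 < k →
      ∀ (w : EuclideanSpace ℝ (Fin n)) (c : ℝ), J (x k) (ω k) (b k) ≤ J (x k) w c) :
    (∀ k, 1 ≤ k → J (x (k + 1)) (ω (k + 1)) (b (k + 1)) ≤ J (x k) (ω k) (b k)) ∧
    (∀ k, 1 ≤ k → -C * (n + m) ≤ J (x k) (ω k) (b k)) ∧
    (∃ L : ℝ, Filter.Tendsto (fun k => J (x k) (ω k) (b k)) Filter.atTop (nhds L)) := by
  have hmono : ∀ k, 1 ≤ k → J (x (k + 1)) (ω (k + 1)) (b (k + 1)) ≤ J (x k) (ω k) (b k) := by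
    intro k hk
    have h1 : J (x (k + 1)) (ω (k + 1)) (b (k + 1)) ≤ J (x (k + 1)) (ω k) (b k) :=
      hminimize (k + 1) (by omega) (ω k) (b k)
    refine h1.trans ?_
    rw [hJ, hJ]
    have hsum : (∑ i : Fin n, max (-1 : ℝ) (-⟪ω k, x (k + 1) i⟫ - b k)) ≤
        ∑ i : Fin n, max (-1 : ℝ) (-⟪ω k, x k i⟫ - b k) := by
      apply Finset.sum_le_sum
      intro i _
      have hsel := hselect (k + 1) (by omega) i
      simp only [Nat.add_sub_cancel] at hsel
      have hle : ⟪ω k, x k i⟫ + b k ≤ (P i).sup' (hP i) fun z => ⟪ω k, z⟫ + b k :=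
        Finset.le_sup' (fun z => ⟪ω k, z⟫ + b k) (hxmem k i)
      exact max_le_max le_rfl (by linarith [hsel ▸ hle])
    have := mul_le_mul_of_nonneg_left hsum hC
    linarith
  have hbound : ∀ k, 1 ≤ k → -C * (n + m) ≤ J (x k) (ω k) (b k) := by
    intro k _
    rw [hJ]
    have h1 : (-(n : ℝ)) ≤ ∑ i : Fin n, max (-1 : ℝ) (-⟪ω k, x k i⟫ - b k) := by
      calc (-(n : ℝ)) = ∑ _i : Fin n, (-1 : ℝ) := by simp
        _ ≤ _ := Finset.sum_le_sum fun i _ => le_max_left _ _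
    have h2 : (-(m : ℝ)) ≤ ∑ j : Fin m, max (-1 : ℝ)
        ((S j).sup' (hS j) fun y => ⟪ω k, y⟫ + b k) := by
      calc (-(m : ℝ)) = ∑ _j : Fin m, (-1 : ℝ) := by simp
        _ ≤ _ := Finset.sum_le_sum fun j _ => le_max_left _ _
    have h3 := mul_le_mul_of_nonneg_left h1 hC
    have h4 := mul_le_mul_of_nonneg_left h2 hC
    have h5 : (0 : ℝ) ≤ ‖ω k‖ ^ 2 := sq_nonneg _
    nlinarith
  refine ⟨hmono, hbound, ?_⟩
  set f : ℕ → ℝ := fun k => J (x k) (ω k) (b k) with hf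
  have hanti : Antitone (fun k => f (k + 1)) := by
    apply antitone_nat_of_succ_le
    intro k
    exact hmono (k + 1) (by omega)
  have hbdd : BddBelow (Set.range fun k => f (k + 1)) := by
    refine ⟨-C * (n + m), ?_⟩
    rintro _ ⟨k, rfl⟩
    exact hbound (k + 1) (by omega)
  have htend : Filter.Tendsto (fun k => f (k + 1)) Filter.atTop
      (nhds (⨅ k, f (k + 1))) := tendsto_atTop_ciInf hanti hbdd
  exact ⟨_, (Filter.tendsto_add_atTop_iff_nat 1).mp htend⟩
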